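/- Let R be a commutative local ring in which 2 is invertible and take m = 1. Then the DSER elementary orthogonal group EO_R(q, h) is a normal subgroup of O_R(q ⊥ h). -/

import Mathlib

/-!
STATEMENT 5: Let R be a commutative local ring in which 2 is invertible and take m = 1.
Then the DSER elementary orthogonal group EO_R(q, h) is a normal subgroup of O_R(q ⊥ h).
-/

namespace DSERMat

open Matrix

variable {R : Type*} [CommRing R] [Invertible (2 : R)]

/-- Index type for `Q ⊥ h^m`: the `z`-block, then the `x`-block, then the `f`-block. -/
abbrev Ind (n m : ℕ) := Fin n ⊕ (Fin m ⊕ Fin m)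

variable {n m : ℕ}

/-- The Gram matrix `Φ = diag(φ, [[0, I_m],[I_m, 0]])` of `q ⊥ h^m`. -/
def Phi (φ : Matrix (Fin n) (Fin n) R) (m : ℕ) : Matrix (Ind n m) (Ind n m) R :=
  fromBlocks φ 0 0 (fromBlocks 0 1 1 0)

/-- The elementary matrix `E_α = [[I_n, 0, −α*],[α, I_m, −(1/2)αα*],[0, 0, I_m]]`,
where `α* = φ⁻¹αᵀ`. -/
def Emat (φ : Matrix (Fin n) (Fin n) R) [Invertible φ] (α : Matrix (Fin m) (Fin n) R) :
    Matrix (Ind n m) (Ind n m) R :=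
  fromBlocks 1 (fromCols 0 (-(⅟φ * αᵀ))) (fromRows α 0)
    (fromBlocks 1 (-((⅟(2:R)) • (α * (⅟φ * αᵀ)))) 0 1)

/-- The elementary matrix `E*_β = [[I_n, −β*, 0],[0, I_m, 0],[β, −(1/2)ββ*, I_m]]`,
where `β* = φ⁻¹βᵀ`. -/
def EmatStar (φ : Matrix (Fin n) (Fin n) R) [Invertible φ] (β : Matrix (Fin m) (Fin n) R) :
    Matrix (Ind n m) (Ind n m) R :=
  fromBlocks 1 (fromCols (-(⅟φ * βᵀ)) 0) (fromRows 0 β)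
    (fromBlocks 1 0 (-((⅟(2:R)) • (β * (⅟φ * βᵀ)))) 1)

/-- The orthogonal group `O_R(q ⊥ h^m)` of the form `Φ`, as a subgroup of the units of the
matrix ring. -/
def OGrp (φ : Matrix (Fin n) (Fin n) R) (m : ℕ) : Subgroup (Matrix (Ind n m) (Ind n m) R)ˣ where
  carrier := {g | (g : Matrix (Ind n m) (Ind n m) R)ᵀ * Phi φ m * g = Phi φ m}
  one_mem' := by simp
  mul_mem' := fun {a b} ha hb => by
    show ((↑(a * b) : Matrix (Ind n m) (Ind n m) R))ᵀ * Phi φ m * (↑(a * b) : Matrix _ _ R)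
        = Phi φ m
    rw [Units.val_mul, transpose_mul]
    calc (b : Matrix (Ind n m) (Ind n m) R)ᵀ * (a : Matrix _ _ R)ᵀ * Phi φ m *
          ((a : Matrix _ _ R) * (b : Matrix _ _ R))
        = (b : Matrix (Ind n m) (Ind n m) R)ᵀ *
            ((a : Matrix _ _ R)ᵀ * Phi φ m * (a : Matrix _ _ R)) * (b : Matrix _ _ R) := by
          simp only [mul_assoc]
      _ = Phi φ m := by rw [ha, hb]
  inv_mem' := fun {a} ha => by
    show ((↑a⁻¹ : Matrix (Ind n m) (Ind n m) R))ᵀ * Phi φ m * (↑a⁻¹ : Matrix _ _ R) = Phi φ m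
    conv_lhs => rw [← ha]
    calc (↑a⁻¹ : Matrix (Ind n m) (Ind n m) R)ᵀ *
          ((a : Matrix _ _ R)ᵀ * Phi φ m * (a : Matrix _ _ R)) * (↑a⁻¹ : Matrix _ _ R)
        = ((a : Matrix (Ind n m) (Ind n m) R) * (↑a⁻¹ : Matrix _ _ R))ᵀ * Phi φ m *
            ((a : Matrix _ _ R) * (↑a⁻¹ : Matrix _ _ R)) := by
          rw [transpose_mul]; simp only [mul_assoc]
      _ = Phi φ m := by
          rw [← Units.val_mul, mul_inv_cancel]; simp

/-- The set of elementary generators `E_α`, `E*_β` inside the unit group. -/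
def ElemSet (φ : Matrix (Fin n) (Fin n) R) [Invertible φ] (m : ℕ) :
    Set (Matrix (Ind n m) (Ind n m) R)ˣ :=
  {g | ∃ α : Matrix (Fin m) (Fin n) R,
    (g : Matrix (Ind n m) (Ind n m) R) = Emat φ α ∨
    (g : Matrix (Ind n m) (Ind n m) R) = EmatStar φ α}

/-- The DSER elementary orthogonal group `EO_R(q, h^m)`. -/
def EOGrp (φ : Matrix (Fin n) (Fin n) R) [Invertible φ] (m : ℕ) :
    Subgroup (Matrix (Ind n m) (Ind n m) R)ˣ :=
  Subgroup.closure (ElemSet φ m)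

/-- The matrix of an automorphism of a smaller block of coordinates, embedded (via the
coordinate injection `u`) as an automorphism of everything, acting as the identity on the
remaining coordinates. -/
def embMat {J : Type*} [Fintype J] [DecidableEq J] {I : Type*} [Fintype I] [DecidableEq I]
    (u : J → I) (A : Matrix J J R) : Matrix I I R :=
  (fun i j => ∑ a : J, ∑ b : J, if i = u a ∧ j = u b then A a b else 0) +
    fun i j => if i = j ∧ ¬(∃ a : J, u a = i) then 1 else 0

end DSERMat


namespace DSERAux

set_option linter.unusedSectionVars false

open Matrix

variable {R : Type*} [CommRing R] {I : Type*} [Fintype I] [DecidableEq I]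

section VMV

variable (a b c d : I → R) (M : Matrix I I R) (r : R)

lemma vmv_mul_vmv : vecMulVec a b * vecMulVec c d = (b ⬝ᵥ c) • vecMulVec a d := by
  ext i j
  simp only [mul_apply, vecMulVec_apply, dotProduct, Matrix.smul_apply, smul_eq_mul, Finset.sum_mul,
    Finset.mul_sum]
  exact Finset.sum_congr rfl fun k _ => by ring

lemma mul_vmv : M * vecMulVec a b = vecMulVec (M *ᵥ a) b := by
  ext i j
  simp only [mul_apply, vecMulVec_apply, mulVec, dotProduct, Finset.sum_mul]
  exact Finset.sum_congr rfl fun k _ => by ring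

lemma vmv_mul : vecMulVec a b * M = vecMulVec a (Mᵀ *ᵥ b) := by
  ext i j
  simp only [mul_apply, vecMulVec_apply, mulVec, transpose_apply, dotProduct, Finset.mul_sum]
  exact Finset.sum_congr rfl fun k _ => by ring

lemma vmv_transpose : (vecMulVec a b)ᵀ = vecMulVec b a := by
  ext i j; simp [vecMulVec_apply, mul_comm]

lemma vmv_add_left : vecMulVec (a + b) c = vecMulVec a c + vecMulVec b c := by
  ext i j; simp [vecMulVec_apply]; ring

lemma vmv_add_right : vecMulVec a (b + c) = vecMulVec a b + vecMulVec a c := by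
  ext i j; simp [vecMulVec_apply]; ring

lemma vmv_smul_left : vecMulVec (r • a) b = r • vecMulVec a b := by
  ext i j; simp [vecMulVec_apply]; ring

lemma vmv_smul_right : vecMulVec a (r • b) = r • vecMulVec a b := by
  ext i j; simp [vecMulVec_apply]; ring

lemma vmv_zero_left : vecMulVec (0 : I → R) a = 0 := by
  ext i j; simp [vecMulVec_apply]

lemma vmv_zero_right : vecMulVec a (0 : I → R) = 0 := by
  ext i j; simp [vecMulVec_apply]

lemma vmv_mulVec : vecMulVec a b *ᵥ c = (b ⬝ᵥ c) • a := by
  funext i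
  simp only [mulVec, vecMulVec_apply, dotProduct, Pi.smul_apply, smul_eq_mul, Finset.sum_mul]
  exact Finset.sum_congr rfl fun k _ => by ring

end VMV

section TV

variable [Invertible (2 : R)]

lemma dot_mulVec_left (A : Matrix I I R) (x y : I → R) :
    (A *ᵥ x) ⬝ᵥ y = x ⬝ᵥ (Aᵀ *ᵥ y) := by
  simp only [mulVec, dotProduct, transpose_apply, Finset.sum_mul, Finset.mul_sum]
  rw [Finset.sum_comm]
  exact Finset.sum_congr rfl fun k _ => Finset.sum_congr rfl fun l _ => by ring

variable (S : Matrix I I R)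

lemma dotS (hS : Sᵀ = S) (a b : I → R) : (S *ᵥ a) ⬝ᵥ b = a ⬝ᵥ (S *ᵥ b) := by
  rw [dot_mulVec_left, hS]

lemma dcommS (hS : Sᵀ = S) (a b : I → R) : a ⬝ᵥ (S *ᵥ b) = b ⬝ᵥ (S *ᵥ a) := by
  rw [← dotS S hS, dotProduct_comm]

/-- The Eichler–Siegel transvection attached to `u` and `w`. -/
def Tv (u w : I → R) : Matrix I I R :=
  1 + vecMulVec w (S *ᵥ u) - vecMulVec u (S *ᵥ w)
    - (⅟(2:R) * (w ⬝ᵥ (S *ᵥ w))) • vecMulVec u (S *ᵥ u)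

variable {S}

lemma Tv_mul (hS : Sᵀ = S) (u w1 w2 : I → R) (h0 : u ⬝ᵥ (S *ᵥ u) = 0)
    (h1 : u ⬝ᵥ (S *ᵥ w1) = 0) (h2 : u ⬝ᵥ (S *ᵥ w2) = 0) :
    Tv S u w1 * Tv S u w2 = Tv S u (w1 + w2) := by
  have z1 : (S *ᵥ u) ⬝ᵥ w1 = 0 := by rw [dotS S hS]; exact h1
  have z2 : (S *ᵥ u) ⬝ᵥ w2 = 0 := by rw [dotS S hS]; exact h2
  have z3 : (S *ᵥ u) ⬝ᵥ u = 0 := by rw [dotS S hS]; exact h0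
  have z4 : (S *ᵥ w1) ⬝ᵥ u = 0 := by rw [dotS S hS, dcommS S hS]; exact h1
  have z5 : (S *ᵥ w2) ⬝ᵥ u = 0 := by rw [dotS S hS, dcommS S hS]; exact h2
  have o2 : (S *ᵥ w1) ⬝ᵥ w2 = w1 ⬝ᵥ (S *ᵥ w2) := dotS S hS w1 w2
  have o3 : w2 ⬝ᵥ (S *ᵥ w1) = w1 ⬝ᵥ (S *ᵥ w2) := dcommS S hS w2 w1
  simp only [Tv, add_mul, mul_add, sub_mul, mul_sub, smul_mul_assoc, mul_smul_comm,
    one_mul, mul_one, vmv_mul_vmv, mulVec_add, vmv_add_left, vmv_add_right,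
    dotProduct_add, add_dotProduct, z1, z2, z3, z4, z5, o2, o3,
    zero_smul, smul_zero, smul_smul, mul_zero, zero_mul]
  ext i j
  simp only [Matrix.add_apply, Matrix.sub_apply, Matrix.smul_apply, one_apply, Matrix.zero_apply, vecMulVec_apply, smul_eq_mul]
  linear_combination (u i * (S *ᵥ u) j * (w1 ⬝ᵥ (S *ᵥ w2))) * invOf_mul_self (2:R)


lemma Tv_zero (u : I → R) : Tv S u 0 = 1 := by
  simp [Tv, vmv_zero_left, vmv_zero_right, mulVec_zero]

lemma Tv_smul_self (u : I → R) (r : R) (h0 : u ⬝ᵥ (S *ᵥ u) = 0) : Tv S u (r • u) = 1 := by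
  simp only [Tv, mulVec_smul, vmv_smul_left, vmv_smul_right, dotProduct_smul, smul_dotProduct,
    smul_eq_mul, h0, mul_zero, zero_smul, smul_zero, sub_zero]
  abel

lemma Tv_inv (hS : Sᵀ = S) (u w : I → R) (h0 : u ⬝ᵥ (S *ᵥ u) = 0)
    (h1 : u ⬝ᵥ (S *ᵥ w) = 0) : Tv S u w * Tv S u (-w) = 1 := by
  have := Tv_mul hS u w (-w) h0 h1 (by rw [mulVec_neg, dotProduct_neg, h1, neg_zero])
  rw [add_neg_cancel, Tv_zero] at this
  exact this

lemma Tv_orth (hS : Sᵀ = S) (u w : I → R) (h0 : u ⬝ᵥ (S *ᵥ u) = 0)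
    (h1 : u ⬝ᵥ (S *ᵥ w) = 0) :
    (Tv S u w)ᵀ * S * Tv S u w = S := by
  have z1 : (S *ᵥ u) ⬝ᵥ w = 0 := by rw [dotS S hS]; exact h1
  have z3 : (S *ᵥ u) ⬝ᵥ u = 0 := by rw [dotS S hS]; exact h0
  have z4 : (S *ᵥ w) ⬝ᵥ u = 0 := by rw [dotS S hS, dcommS S hS]; exact h1
  have o3 : w ⬝ᵥ S *ᵥ w = (S *ᵥ w) ⬝ᵥ w := (dotS S hS w w).symm
  simp only [Tv, transpose_add, transpose_sub, transpose_smul, transpose_one, vmv_transpose,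
    add_mul, mul_add, sub_mul, mul_sub, smul_mul_assoc, mul_smul_comm,
    one_mul, mul_one, vmv_mul_vmv, vmv_mul, mul_vmv, vmv_mulVec, hS,
    z1, z3, z4, o3, zero_smul, smul_zero, smul_smul, mul_zero, zero_mul]
  ext i j
  simp only [Matrix.add_apply, Matrix.sub_apply, Matrix.smul_apply, one_apply, Matrix.zero_apply, vecMulVec_apply,
    Pi.smul_apply, Pi.zero_apply, smul_eq_mul]
  linear_combination (-((S *ᵥ u) i * (S *ᵥ u) j * ((S *ᵥ w) ⬝ᵥ w))) * invOf_mul_self (2:R)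

lemma Tv_conj (u w : I → R) (g : (Matrix I I R)ˣ)
    (hg : (g : Matrix I I R)ᵀ * S * g = S) :
    (g : Matrix I I R) * Tv S u w * (g⁻¹ : (Matrix I I R)ˣ) =
      Tv S ((g : Matrix I I R) *ᵥ u) ((g : Matrix I I R) *ᵥ w) := by
  have key : ∀ x : I → R, (g : Matrix I I R)ᵀ *ᵥ (S *ᵥ ((g : Matrix I I R) *ᵥ x)) = S *ᵥ x := by
    intro x
    rw [mulVec_mulVec, mulVec_mulVec, hg]
  have hdot : ((g : Matrix I I R) *ᵥ w) ⬝ᵥ (S *ᵥ ((g : Matrix I I R) *ᵥ w))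
      = w ⬝ᵥ (S *ᵥ w) := by
    rw [dot_mulVec_left, key]
  have main : (g : Matrix I I R) * Tv S u w
      = Tv S ((g : Matrix I I R) *ᵥ u) ((g : Matrix I I R) *ᵥ w) * (g : Matrix I I R) := by
    simp only [Tv, mul_add, mul_sub, add_mul, sub_mul, one_mul, mul_one, mul_smul_comm,
      smul_mul_assoc, mul_vmv, vmv_mul, hdot]
    rw [key, key]
  rw [main, Matrix.mul_assoc, ← Units.val_mul, mul_inv_cancel, Units.val_one, Matrix.mul_one]

lemma Tv_scale (u w : I → R) (r : R) : Tv S (r • u) w = Tv S u (r • w) := by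
  simp only [Tv, mulVec_smul, vmv_smul_left, vmv_smul_right, dotProduct_smul, smul_dotProduct,
    smul_eq_mul, smul_smul]
  ext i j
  simp only [Matrix.add_apply, Matrix.sub_apply, Matrix.smul_apply, one_apply, Matrix.zero_apply, vecMulVec_apply,
    smul_eq_mul]
  ring

lemma Tv_mulVec (u w v : I → R) :
    Tv S u w *ᵥ v = v + ((S *ᵥ u) ⬝ᵥ v) • w - ((S *ᵥ w) ⬝ᵥ v) • u
      - (⅟(2:R) * (w ⬝ᵥ (S *ᵥ w)) * ((S *ᵥ u) ⬝ᵥ v)) • u := by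
  simp only [Tv, add_mulVec, sub_mulVec, one_mulVec, smul_mulVec, vmv_mulVec, smul_smul]

lemma orth_dot (S h : Matrix I I R) (hh : hᵀ * S * h = S) (a b : I → R) :
    (h *ᵥ a) ⬝ᵥ (S *ᵥ (h *ᵥ b)) = a ⬝ᵥ (S *ᵥ b) := by
  rw [dot_mulVec_left, mulVec_mulVec, mulVec_mulVec, hh]

/-- The transvection `Tv S u w` as a unit of the matrix ring. -/
def TvUnit (S : Matrix I I R) (u w : I → R) (hS : Sᵀ = S) (h0 : u ⬝ᵥ (S *ᵥ u) = 0)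
    (h1 : u ⬝ᵥ (S *ᵥ w) = 0) : (Matrix I I R)ˣ where
  val := Tv S u w
  inv := Tv S u (-w)
  val_inv := Tv_inv hS u w h0 h1
  inv_val := by
    have := Tv_inv hS u (-w) h0 (by rw [mulVec_neg, dotProduct_neg, h1, neg_zero])
    rwa [neg_neg] at this

@[simp] lemma TvUnit_val (S : Matrix I I R) (u w : I → R) (hS h0 h1) :
    ((TvUnit S u w hS h0 h1 : (Matrix I I R)ˣ) : Matrix I I R) = Tv S u w := rfl

@[simp] lemma TvUnit_inv_val (S : Matrix I I R) (u w : I → R) (hS h0 h1) :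
    (((TvUnit S u w hS h0 h1 : (Matrix I I R)ˣ))⁻¹ : (Matrix I I R)ˣ) = (Tv S u (-w) : Matrix I I R) := rfl

end TV

section Spec

open DSERMat

variable [Invertible (2 : R)] {n : ℕ}

/-- x-slot index. -/
abbrev x0 (n : ℕ) : Ind n 1 := Sum.inr (Sum.inl 0)
/-- f-slot index. -/
abbrev f0 (n : ℕ) : Ind n 1 := Sum.inr (Sum.inr 0)

/-- The hyperbolic basis vector `e_x`. -/
def vx : Ind n 1 → R := Sum.elim 0 (Sum.elim 1 0)
/-- The hyperbolic basis vector `e_f`. -/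
def vf : Ind n 1 → R := Sum.elim 0 (Sum.elim 0 1)

variable (φ : Matrix (Fin n) (Fin n) R) [Invertible φ]

lemma Phi_symm (hφ : φ.IsSymm) : (Phi φ 1)ᵀ = Phi φ 1 := by
  simp only [Phi, fromBlocks_transpose, transpose_zero, transpose_one, hφ.eq]

lemma Phi_mulVec (v : Ind n 1 → R) :
    Phi φ 1 *ᵥ v = Sum.elim (φ *ᵥ (v ∘ Sum.inl))
      (Sum.elim (fun _ => v (f0 n)) (fun _ => v (x0 n))) := by
  funext i
  rcases i with i | i | i
  · simp [Phi, mulVec, dotProduct, Fintype.sum_sum_type, fromBlocks, Function.comp]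
  · obtain rfl := Fin.eq_zero i
    simp [Phi, mulVec, dotProduct, Fintype.sum_sum_type, fromBlocks, one_apply]
  · obtain rfl := Fin.eq_zero i
    simp [Phi, mulVec, dotProduct, Fintype.sum_sum_type, fromBlocks, one_apply]

lemma Phi_vx : Phi φ 1 *ᵥ (vx : Ind n 1 → R) = vf := by
  rw [Phi_mulVec]
  funext i
  rcases i with i | i | i <;>
    simp [vx, vf, mulVec, dotProduct]

lemma Phi_vf : Phi φ 1 *ᵥ (vf : Ind n 1 → R) = vx := by
  rw [Phi_mulVec]
  funext i
  rcases i with i | i | i <;>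
    simp [vx, vf, mulVec, dotProduct]

lemma dot_vx (y : Ind n 1 → R) : (vx : Ind n 1 → R) ⬝ᵥ y = y (x0 n) := by
  simp [vx, dotProduct, Fintype.sum_sum_type]

lemma dot_vf (y : Ind n 1 → R) : (vf : Ind n 1 → R) ⬝ᵥ y = y (f0 n) := by
  simp [vf, dotProduct, Fintype.sum_sum_type]

lemma vx_iso : (vx : Ind n 1 → R) ⬝ᵥ (Phi φ 1 *ᵥ vx) = 0 := by
  rw [Phi_vx, dot_vx]; simp [vf]

lemma vf_iso : (vf : Ind n 1 → R) ⬝ᵥ (Phi φ 1 *ᵥ vf) = 0 := by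
  rw [Phi_vf, dot_vf]; simp [vx]

lemma vx_perp (w : Ind n 1 → R) : (vx : Ind n 1 → R) ⬝ᵥ (Phi φ 1 *ᵥ w) = w (f0 n) := by
  rw [dot_vx, Phi_mulVec]; simp

lemma vf_perp (w : Ind n 1 → R) : (vf : Ind n 1 → R) ⬝ᵥ (Phi φ 1 *ᵥ w) = w (x0 n) := by
  rw [dot_vf, Phi_mulVec]; simp

lemma dot_Phi_self (w : Ind n 1 → R) (hw : w (f0 n) = 0 ∨ w (x0 n) = 0) :
    w ⬝ᵥ (Phi φ 1 *ᵥ w) = (w ∘ Sum.inl) ⬝ᵥ (φ *ᵥ (w ∘ Sum.inl)) := by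
  rw [Phi_mulVec]
  rcases hw with hw | hw <;>
    simp [dotProduct, Fintype.sum_sum_type, hw, Function.comp]

end Spec

section Translate

open DSERMat

variable [Invertible (2 : R)] {n : ℕ}
variable (φ : Matrix (Fin n) (Fin n) R) [Invertible φ]

lemma invphi_alpha (c : Fin n → R) (j : Fin n) :
    (⅟φ * (Matrix.of fun (_ : Fin 1) k => -((φ *ᵥ c) k))ᵀ) j 0 = -(c j) := by
  have h1 : ⅟φ *ᵥ (φ *ᵥ c) = c := by rw [mulVec_mulVec, invOf_mul_self, one_mulVec]
  calc (⅟φ * (Matrix.of fun (_ : Fin 1) k => -((φ *ᵥ c) k))ᵀ) j 0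
      = -((⅟φ *ᵥ (φ *ᵥ c)) j) := by
        simp only [mul_apply, transpose_apply, Matrix.of_apply, mul_neg,
          Finset.sum_neg_distrib, mulVec, dotProduct]
    _ = -(c j) := by rw [h1]

lemma alpha_sq (hφ : φ.IsSymm) (c : Fin n → R) :
    ((Matrix.of fun (_ : Fin 1) k => -((φ *ᵥ c) k)) *
      (⅟φ * (Matrix.of fun (_ : Fin 1) k => -((φ *ᵥ c) k))ᵀ)) 0 0 = c ⬝ᵥ (φ *ᵥ c) := by
  rw [mul_apply]
  simp only [invphi_alpha, Matrix.of_apply, neg_mul_neg]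
  rw [show (∑ k, (φ *ᵥ c) k * c k) = (φ *ᵥ c) ⬝ᵥ c from rfl, dot_mulVec_left, hφ.eq]

lemma invphi_alpha' (c : Fin n → R) (j : Fin n) :
    (φ⁻¹ * (Matrix.of fun (_ : Fin 1) k => -((φ *ᵥ c) k))ᵀ) j 0 = -(c j) := by
  rw [← Matrix.invOf_eq_nonsing_inv]; exact invphi_alpha φ c j

lemma alpha_sq' (hφ : φ.IsSymm) (c : Fin n → R) :
    ((Matrix.of fun (_ : Fin 1) k => -((φ *ᵥ c) k)) *
      (φ⁻¹ * (Matrix.of fun (_ : Fin 1) k => -((φ *ᵥ c) k))ᵀ)) 0 0 = c ⬝ᵥ (φ *ᵥ c) := by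
  rw [← Matrix.invOf_eq_nonsing_inv]; exact alpha_sq φ hφ c

lemma Tv_vx_eq (hφ : φ.IsSymm) (w : Ind n 1 → R) (hw : w (f0 n) = 0) :
    Tv (Phi φ 1) vx w = Emat φ (Matrix.of fun _ j => -((φ *ᵥ (w ∘ Sum.inl)) j)) := by
  have hc0 : w ⬝ᵥ (Phi φ 1 *ᵥ w) = (w ∘ Sum.inl) ⬝ᵥ (φ *ᵥ (w ∘ Sum.inl)) :=
    dot_Phi_self φ w (Or.inl hw)
  ext i j
  simp only [Tv, Matrix.add_apply, Matrix.sub_apply, Pi.smul_apply, Matrix.smul_apply, one_apply, vecMulVec_apply,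
    smul_eq_mul, Phi_vx, hc0]
  rcases i with i | i | i <;> rcases j with j | j | j
  · simp [Emat, vx, vf, one_apply]
  · obtain rfl := Fin.eq_zero j
    simp [Emat, vx, vf]
  · obtain rfl := Fin.eq_zero j
    simp [Emat, vx, vf, invphi_alpha', Function.comp]
  · obtain rfl := Fin.eq_zero i
    simp [Emat, vx, vf, Phi_mulVec, Function.comp]
  · obtain rfl := Fin.eq_zero i; obtain rfl := Fin.eq_zero j
    simp [Emat, vx, vf, Phi_mulVec, hw, one_apply]
  · obtain rfl := Fin.eq_zero i; obtain rfl := Fin.eq_zero j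
    simp [Emat, vx, vf, Phi_mulVec, alpha_sq' φ hφ, one_apply]
  · obtain rfl := Fin.eq_zero i
    simp [Emat, vx, vf]
  · obtain rfl := Fin.eq_zero i; obtain rfl := Fin.eq_zero j
    simp [Emat, vx, vf, one_apply]
  · obtain rfl := Fin.eq_zero i; obtain rfl := Fin.eq_zero j
    simp [Emat, vx, vf, hw, one_apply]

lemma Tv_vf_eq (hφ : φ.IsSymm) (w : Ind n 1 → R) (hw : w (x0 n) = 0) :
    Tv (Phi φ 1) vf w = EmatStar φ (Matrix.of fun _ j => -((φ *ᵥ (w ∘ Sum.inl)) j)) := by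
  have hc0 : w ⬝ᵥ (Phi φ 1 *ᵥ w) = (w ∘ Sum.inl) ⬝ᵥ (φ *ᵥ (w ∘ Sum.inl)) :=
    dot_Phi_self φ w (Or.inr hw)
  ext i j
  simp only [Tv, Matrix.add_apply, Matrix.sub_apply, Pi.smul_apply, Matrix.smul_apply, one_apply, vecMulVec_apply,
    smul_eq_mul, Phi_vf, hc0]
  rcases i with i | i | i <;> rcases j with j | j | j
  · simp [EmatStar, vx, vf, one_apply]
  · obtain rfl := Fin.eq_zero j
    simp [EmatStar, vx, vf, invphi_alpha', Function.comp]
  · obtain rfl := Fin.eq_zero j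
    simp [EmatStar, vx, vf]
  · obtain rfl := Fin.eq_zero i
    simp [EmatStar, vx, vf, hw, Phi_mulVec, Function.comp]
  · obtain rfl := Fin.eq_zero i; obtain rfl := Fin.eq_zero j
    simp [EmatStar, vx, vf, hw, Phi_mulVec, one_apply]
  · obtain rfl := Fin.eq_zero i; obtain rfl := Fin.eq_zero j
    simp [EmatStar, vx, vf, one_apply]
  · obtain rfl := Fin.eq_zero i
    simp [EmatStar, vx, vf, Phi_mulVec, Function.comp]
  · obtain rfl := Fin.eq_zero i; obtain rfl := Fin.eq_zero j
    simp [EmatStar, vx, vf, Phi_mulVec, alpha_sq' φ hφ, one_apply]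
  · obtain rfl := Fin.eq_zero i; obtain rfl := Fin.eq_zero j
    simp [EmatStar, vx, vf, hw, Phi_mulVec, one_apply]

lemma Emat_eq_Tv (α : Matrix (Fin 1) (Fin n) R) (hφ : φ.IsSymm) :
    Emat φ α = Tv (Phi φ 1) vx (Sum.elim (fun j => -((⅟φ * αᵀ) j 0)) 0) := by
  set c : Fin n → R := fun j => -((⅟φ * αᵀ) j 0) with hc
  have hw : (Sum.elim c (0 : Fin 1 ⊕ Fin 1 → R)) (f0 n) = 0 := rfl
  rw [Tv_vx_eq φ hφ _ hw]
  have hcomp : ((Sum.elim c (0 : Fin 1 ⊕ Fin 1 → R)) ∘ Sum.inl) = c := rfl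
  rw [hcomp]
  have hα : (Matrix.of fun (_ : Fin 1) j => -((φ *ᵥ c) j)) = α := by
    ext i j
    obtain rfl := Fin.eq_zero i
    simp only [Matrix.of_apply]
    have h2 : (φ *ᵥ c) j = -((φ * (⅟φ * αᵀ)) j 0) := by
      simp only [hc, mulVec, dotProduct, mul_apply, mul_neg, Finset.sum_neg_distrib]
    rw [h2, neg_neg, ← Matrix.mul_assoc, mul_invOf_self, Matrix.one_mul, transpose_apply]
  rw [hα]

lemma EmatStar_eq_Tv (β : Matrix (Fin 1) (Fin n) R) (hφ : φ.IsSymm) :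
    EmatStar φ β = Tv (Phi φ 1) vf (Sum.elim (fun j => -((⅟φ * βᵀ) j 0)) 0) := by
  set c : Fin n → R := fun j => -((⅟φ * βᵀ) j 0) with hc
  have hw : (Sum.elim c (0 : Fin 1 ⊕ Fin 1 → R)) (x0 n) = 0 := rfl
  rw [Tv_vf_eq φ hφ _ hw]
  have hcomp : ((Sum.elim c (0 : Fin 1 ⊕ Fin 1 → R)) ∘ Sum.inl) = c := rfl
  rw [hcomp]
  have hα : (Matrix.of fun (_ : Fin 1) j => -((φ *ᵥ c) j)) = β := by
    ext i j
    obtain rfl := Fin.eq_zero i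
    simp only [Matrix.of_apply]
    have h2 : (φ *ᵥ c) j = -((φ * (⅟φ * βᵀ)) j 0) := by
      simp only [hc, mulVec, dotProduct, mul_apply, mul_neg, Finset.sum_neg_distrib]
    rw [h2, neg_neg, ← Matrix.mul_assoc, mul_invOf_self, Matrix.one_mul, transpose_apply]
  rw [hα]

end Translate

section Mem

open DSERMat

variable [Invertible (2 : R)] {n : ℕ}
variable (φ : Matrix (Fin n) (Fin n) R) [Invertible φ]

lemma mem_O_of_val_Tv (hφ : φ.IsSymm) (g : (Matrix (Ind n 1) (Ind n 1) R)ˣ) (u w : Ind n 1 → R)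
    (h0 : u ⬝ᵥ (Phi φ 1 *ᵥ u) = 0) (h1 : u ⬝ᵥ (Phi φ 1 *ᵥ w) = 0)
    (hg : (g : Matrix (Ind n 1) (Ind n 1) R) = Tv (Phi φ 1) u w) : g ∈ OGrp φ 1 := by
  show (g : Matrix (Ind n 1) (Ind n 1) R)ᵀ * Phi φ 1 * g = Phi φ 1
  rw [hg]
  exact Tv_orth (Phi_symm φ hφ) u w h0 h1

lemma mem_EO_vx (hφ : φ.IsSymm) (g : (Matrix (Ind n 1) (Ind n 1) R)ˣ) (w : Ind n 1 → R)
    (hw : (vx : Ind n 1 → R) ⬝ᵥ (Phi φ 1 *ᵥ w) = 0)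
    (hg : (g : Matrix (Ind n 1) (Ind n 1) R) = Tv (Phi φ 1) vx w) : g ∈ EOGrp φ 1 := by
  refine Subgroup.subset_closure ⟨Matrix.of fun _ j => -((φ *ᵥ (w ∘ Sum.inl)) j), Or.inl ?_⟩
  rw [hg]
  exact Tv_vx_eq φ hφ w (by rw [← vx_perp φ w]; exact hw)

lemma mem_EO_vf (hφ : φ.IsSymm) (g : (Matrix (Ind n 1) (Ind n 1) R)ˣ) (w : Ind n 1 → R)
    (hw : (vf : Ind n 1 → R) ⬝ᵥ (Phi φ 1 *ᵥ w) = 0)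
    (hg : (g : Matrix (Ind n 1) (Ind n 1) R) = Tv (Phi φ 1) vf w) : g ∈ EOGrp φ 1 := by
  refine Subgroup.subset_closure ⟨Matrix.of fun _ j => -((φ *ᵥ (w ∘ Sum.inl)) j), Or.inr ?_⟩
  rw [hg]
  exact Tv_vf_eq φ hφ w (by rw [← vf_perp φ w]; exact hw)

lemma mem_caseA (hφ : φ.IsSymm) (u w : Ind n 1 → R)
    (h0 : u ⬝ᵥ (Phi φ 1 *ᵥ u) = 0) (h1 : u ⬝ᵥ (Phi φ 1 *ᵥ w) = 0)
    (htu : IsUnit (u (f0 n))) (g : (Matrix (Ind n 1) (Ind n 1) R)ˣ)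
    (hg : (g : Matrix (Ind n 1) (Ind n 1) R) = Tv (Phi φ 1) u w) : g ∈ EOGrp φ 1 := by
  have hS : (Phi φ 1)ᵀ = Phi φ 1 := Phi_symm φ hφ
  obtain ⟨t, ht⟩ := htu
  set v : Ind n 1 → R := ((↑t⁻¹ : R)) • u with hv
  have hvu : u = (t : R) • v := by
    rw [hv, smul_smul, Units.mul_inv, one_smul]
  have hval : (g : Matrix (Ind n 1) (Ind n 1) R) = Tv (Phi φ 1) v ((t : R) • w) := by
    rw [hg]; conv_lhs => rw [hvu]
    rw [Tv_scale]
  have hvf1 : v (f0 n) = 1 := by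
    simp only [hv, Pi.smul_apply, smul_eq_mul, ← ht, Units.inv_mul]
  have hviso : v ⬝ᵥ (Phi φ 1 *ᵥ v) = 0 := by
    simp [hv, smul_dotProduct, dotProduct_smul, mulVec_smul, h0]
  have hvw : v ⬝ᵥ (Phi φ 1 *ᵥ ((t : R) • w)) = 0 := by
    simp [hv, smul_dotProduct, dotProduct_smul, mulVec_smul, h1]
  -- the elementary matrix E with E e_f = v
  set wα : Ind n 1 → R := Sum.elim (v ∘ Sum.inl) 0 with hwα
  have hwαperp : (vx : Ind n 1 → R) ⬝ᵥ (Phi φ 1 *ᵥ wα) = 0 := by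
    rw [vx_perp]; rfl
  have hxiso := vx_iso (R := R) φ
  have hfiso := vf_iso (R := R) φ
  set EU := TvUnit (Phi φ 1) vx wα hS hxiso hwαperp with hEU
  have hEO : ((EU : Matrix (Ind n 1) (Ind n 1) R))ᵀ * Phi φ 1 * EU = Phi φ 1 :=
    Tv_orth hS vx wα hxiso hwαperp
  have hEinvO : ((↑EU⁻¹ : Matrix (Ind n 1) (Ind n 1) R))ᵀ * Phi φ 1 * (↑EU⁻¹ : Matrix (Ind n 1) (Ind n 1) R) = Phi φ 1 := by
    rw [hEU, TvUnit_inv_val]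
    exact Tv_orth hS vx (-wα) hxiso (by rw [mulVec_neg, dotProduct_neg, hwαperp, neg_zero])
  -- the scalar dα
  have hdα : wα ⬝ᵥ (Phi φ 1 *ᵥ wα) = (v ∘ Sum.inl) ⬝ᵥ (φ *ᵥ (v ∘ Sum.inl)) :=
    dot_Phi_self φ wα (Or.inl rfl)
  have hsum : (v ∘ Sum.inl) ⬝ᵥ (φ *ᵥ (v ∘ Sum.inl)) + v (x0 n) + v (x0 n) = 0 := by
    have h := hviso
    rw [Phi_mulVec] at h
    simp only [dotProduct, Fintype.sum_sum_type, Fin.sum_univ_one, Function.comp,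
      Sum.elim_inl, Sum.elim_inr, hvf1, mul_one, one_mul] at h ⊢
    linear_combination h
  have hvx0 : v (x0 n) = -(⅟(2:R) * (wα ⬝ᵥ (Phi φ 1 *ᵥ wα))) := by
    rw [hdα]
    linear_combination (⅟(2:R)) * hsum - (v (x0 n)) * invOf_mul_self (2:R)
  have hEvf : (EU : Matrix (Ind n 1) (Ind n 1) R) *ᵥ vf = v := by
    rw [hEU, TvUnit_val, Tv_mulVec, Phi_vx]
    have e1 : (vf : Ind n 1 → R) ⬝ᵥ vf = 1 := by rw [dot_vf]; simp [vf]
    have e2 : (Phi φ 1 *ᵥ wα) ⬝ᵥ vf = 0 := by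
      rw [dotS _ hS, Phi_vf, dotProduct_comm, dot_vx]; rfl
    rw [e1, e2]
    funext i
    rcases i with i | i | i
    · simp [vf, hwα, vx, Function.comp]
    · obtain rfl := Fin.eq_zero i
      simp only [Pi.add_apply, Pi.sub_apply, Pi.smul_apply, smul_eq_mul]
      rw [show (vf : Ind n 1 → R) (Sum.inr (Sum.inl 0)) = 0 from rfl,
        show (wα : Ind n 1 → R) (Sum.inr (Sum.inl 0)) = 0 from rfl,
        show (vx : Ind n 1 → R) (Sum.inr (Sum.inl 0)) = 1 from rfl]
      rw [hvx0]; ring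
    · obtain rfl := Fin.eq_zero i
      simp [vf, vx, hwα, hvf1]
  have hEinv_v : ((↑EU⁻¹ : Matrix (Ind n 1) (Ind n 1) R)) *ᵥ v = vf := by
    rw [← hEvf, mulVec_mulVec, ← Units.val_mul, inv_mul_cancel, Units.val_one, one_mulVec]
  set w₀ : Ind n 1 → R := ((↑EU⁻¹ : Matrix (Ind n 1) (Ind n 1) R)) *ᵥ ((t : R) • w) with hw₀
  have hperp₀ : (vf : Ind n 1 → R) ⬝ᵥ (Phi φ 1 *ᵥ w₀) = 0 := by
    rw [← hEinv_v, hw₀, orth_dot _ _ hEinvO]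
    exact hvw
  set MU := TvUnit (Phi φ 1) vf w₀ hS hfiso hperp₀ with hMU
  have hEw₀ : (EU : Matrix (Ind n 1) (Ind n 1) R) *ᵥ w₀ = (t : R) • w := by
    rw [hw₀, mulVec_mulVec, ← Units.val_mul, mul_inv_cancel, Units.val_one, one_mulVec]
  have hgval : (g : Matrix (Ind n 1) (Ind n 1) R)
      = (EU : Matrix (Ind n 1) (Ind n 1) R) * (MU : Matrix (Ind n 1) (Ind n 1) R) *
        ((↑EU⁻¹ : Matrix (Ind n 1) (Ind n 1) R)) := by
    rw [hval, ← hEvf, ← hEw₀, ← Tv_conj vf w₀ EU hEO]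
    rfl
  have hg_eq : g = EU * MU * EU⁻¹ := by
    apply Units.ext
    rw [hgval]; simp [Units.val_mul]
  rw [hg_eq]
  have hEU_mem : EU ∈ EOGrp φ 1 :=
    mem_EO_vx φ hφ EU wα hwαperp rfl
  have hMU_mem : MU ∈ EOGrp φ 1 :=
    mem_EO_vf φ hφ MU w₀ hperp₀ rfl
  exact mul_mem (mul_mem hEU_mem hMU_mem) (inv_mem hEU_mem)

lemma mem_caseB (hφ : φ.IsSymm) (u w : Ind n 1 → R)
    (h0 : u ⬝ᵥ (Phi φ 1 *ᵥ u) = 0) (h1 : u ⬝ᵥ (Phi φ 1 *ᵥ w) = 0)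
    (htu : IsUnit (u (x0 n))) (g : (Matrix (Ind n 1) (Ind n 1) R)ˣ)
    (hg : (g : Matrix (Ind n 1) (Ind n 1) R) = Tv (Phi φ 1) u w) : g ∈ EOGrp φ 1 := by
  have hS : (Phi φ 1)ᵀ = Phi φ 1 := Phi_symm φ hφ
  obtain ⟨t, ht⟩ := htu
  set v : Ind n 1 → R := ((↑t⁻¹ : R)) • u with hv
  have hvu : u = (t : R) • v := by
    rw [hv, smul_smul, Units.mul_inv, one_smul]
  have hval : (g : Matrix (Ind n 1) (Ind n 1) R) = Tv (Phi φ 1) v ((t : R) • w) := by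
    rw [hg]; conv_lhs => rw [hvu]
    rw [Tv_scale]
  have hvx1 : v (x0 n) = 1 := by
    simp only [hv, Pi.smul_apply, smul_eq_mul, ← ht, Units.inv_mul]
  have hviso : v ⬝ᵥ (Phi φ 1 *ᵥ v) = 0 := by
    simp [hv, smul_dotProduct, dotProduct_smul, mulVec_smul, h0]
  have hvw : v ⬝ᵥ (Phi φ 1 *ᵥ ((t : R) • w)) = 0 := by
    simp [hv, smul_dotProduct, dotProduct_smul, mulVec_smul, h1]
  -- the elementary matrix E with E e_x = v
  set wβ : Ind n 1 → R := Sum.elim (v ∘ Sum.inl) 0 with hwβ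
  have hwβperp : (vf : Ind n 1 → R) ⬝ᵥ (Phi φ 1 *ᵥ wβ) = 0 := by
    rw [vf_perp]; rfl
  have hxiso := vx_iso (R := R) φ
  have hfiso := vf_iso (R := R) φ
  set EU := TvUnit (Phi φ 1) vf wβ hS hfiso hwβperp with hEU
  have hEO : ((EU : Matrix (Ind n 1) (Ind n 1) R))ᵀ * Phi φ 1 * EU = Phi φ 1 :=
    Tv_orth hS vf wβ hfiso hwβperp
  have hEinvO : ((↑EU⁻¹ : Matrix (Ind n 1) (Ind n 1) R))ᵀ * Phi φ 1 * (↑EU⁻¹ : Matrix (Ind n 1) (Ind n 1) R) = Phi φ 1 := by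
    rw [hEU, TvUnit_inv_val]
    exact Tv_orth hS vf (-wβ) hfiso (by rw [mulVec_neg, dotProduct_neg, hwβperp, neg_zero])
  have hdβ : wβ ⬝ᵥ (Phi φ 1 *ᵥ wβ) = (v ∘ Sum.inl) ⬝ᵥ (φ *ᵥ (v ∘ Sum.inl)) :=
    dot_Phi_self φ wβ (Or.inr rfl)
  have hsum : (v ∘ Sum.inl) ⬝ᵥ (φ *ᵥ (v ∘ Sum.inl)) + v (f0 n) + v (f0 n) = 0 := by
    have h := hviso
    rw [Phi_mulVec] at h
    simp only [dotProduct, Fintype.sum_sum_type, Fin.sum_univ_one, Function.comp,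
      Sum.elim_inl, Sum.elim_inr, hvx1, mul_one, one_mul] at h ⊢
    linear_combination h
  have hvf0 : v (f0 n) = -(⅟(2:R) * (wβ ⬝ᵥ (Phi φ 1 *ᵥ wβ))) := by
    rw [hdβ]
    linear_combination (⅟(2:R)) * hsum - (v (f0 n)) * invOf_mul_self (2:R)
  have hEvx : (EU : Matrix (Ind n 1) (Ind n 1) R) *ᵥ vx = v := by
    rw [hEU, TvUnit_val, Tv_mulVec, Phi_vf]
    have e1 : (vx : Ind n 1 → R) ⬝ᵥ vx = 1 := by rw [dot_vx]; simp [vx]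
    have e2 : (Phi φ 1 *ᵥ wβ) ⬝ᵥ vx = 0 := by
      rw [dotS _ hS, Phi_vx, dotProduct_comm, dot_vf]; rfl
    rw [e1, e2]
    funext i
    rcases i with i | i | i
    · simp [vx, hwβ, vf, Function.comp]
    · obtain rfl := Fin.eq_zero i
      simp [vx, vf, hwβ, hvx1]
    · obtain rfl := Fin.eq_zero i
      simp only [Pi.add_apply, Pi.sub_apply, Pi.smul_apply, smul_eq_mul]
      rw [show (vx : Ind n 1 → R) (Sum.inr (Sum.inr 0)) = 0 from rfl,
        show (wβ : Ind n 1 → R) (Sum.inr (Sum.inr 0)) = 0 from rfl,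
        show (vf : Ind n 1 → R) (Sum.inr (Sum.inr 0)) = 1 from rfl]
      rw [hvf0]; ring
  have hEinv_v : ((↑EU⁻¹ : Matrix (Ind n 1) (Ind n 1) R)) *ᵥ v = vx := by
    rw [← hEvx, mulVec_mulVec, ← Units.val_mul, inv_mul_cancel, Units.val_one, one_mulVec]
  set w₀ : Ind n 1 → R := ((↑EU⁻¹ : Matrix (Ind n 1) (Ind n 1) R)) *ᵥ ((t : R) • w) with hw₀
  have hperp₀ : (vx : Ind n 1 → R) ⬝ᵥ (Phi φ 1 *ᵥ w₀) = 0 := by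
    rw [← hEinv_v, hw₀, orth_dot _ _ hEinvO]
    exact hvw
  set MU := TvUnit (Phi φ 1) vx w₀ hS hxiso hperp₀ with hMU
  have hEw₀ : (EU : Matrix (Ind n 1) (Ind n 1) R) *ᵥ w₀ = (t : R) • w := by
    rw [hw₀, mulVec_mulVec, ← Units.val_mul, mul_inv_cancel, Units.val_one, one_mulVec]
  have hgval : (g : Matrix (Ind n 1) (Ind n 1) R)
      = (EU : Matrix (Ind n 1) (Ind n 1) R) * (MU : Matrix (Ind n 1) (Ind n 1) R) *
        ((↑EU⁻¹ : Matrix (Ind n 1) (Ind n 1) R)) := by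
    rw [hval, ← hEvx, ← hEw₀, ← Tv_conj vx w₀ EU hEO]
    rfl
  have hg_eq : g = EU * MU * EU⁻¹ := by
    apply Units.ext
    rw [hgval]; simp [Units.val_mul]
  rw [hg_eq]
  have hEU_mem : EU ∈ EOGrp φ 1 :=
    mem_EO_vf φ hφ EU wβ hwβperp rfl
  have hMU_mem : MU ∈ EOGrp φ 1 :=
    mem_EO_vx φ hφ MU w₀ hperp₀ rfl
  exact mul_mem (mul_mem hEU_mem hMU_mem) (inv_mem hEU_mem)

end Mem

section MainLemma

open DSERMat

variable [Invertible (2 : R)] [IsLocalRing R] {n : ℕ}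

lemma dot_unit_exists {ι : Type*} [Fintype ι] (v c : ι → R) (h : IsUnit (c ⬝ᵥ v)) :
    ∃ i, IsUnit (v i) := by
  by_contra hno
  push_neg at hno
  have hmem : c ⬝ᵥ v ∈ IsLocalRing.maximalIdeal R := by
    rw [dotProduct]
    refine Ideal.sum_mem _ fun i _ => Ideal.mul_mem_left _ _ ?_
    rw [IsLocalRing.mem_maximalIdeal, mem_nonunits_iff]
    exact hno i
  exact (mem_nonunits_iff.mp ((IsLocalRing.mem_maximalIdeal _).mp hmem)) h

variable (φ : Matrix (Fin n) (Fin n) R) [Invertible φ]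

lemma mem_main (hφ : φ.IsSymm) (u w : Ind n 1 → R)
    (h0 : u ⬝ᵥ (Phi φ 1 *ᵥ u) = 0) (h1 : u ⬝ᵥ (Phi φ 1 *ᵥ w) = 0)
    (hu : ∃ c : Ind n 1 → R, IsUnit (c ⬝ᵥ u)) (g : (Matrix (Ind n 1) (Ind n 1) R)ˣ)
    (hg : (g : Matrix (Ind n 1) (Ind n 1) R) = Tv (Phi φ 1) u w) : g ∈ EOGrp φ 1 := by
  have hS : (Phi φ 1)ᵀ = Phi φ 1 := Phi_symm φ hφ
  by_cases hA : IsUnit (u (f0 n))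
  · exact mem_caseA φ hφ u w h0 h1 hA g hg
  by_cases hB : IsUnit (u (x0 n))
  · exact mem_caseB φ hφ u w h0 h1 hB g hg
  -- case C: some z-entry of u is a unit
  obtain ⟨c, hc⟩ := hu
  obtain ⟨i, hi⟩ := dot_unit_exists u c hc
  rcases i with i | i | i
  rotate_left
  · obtain rfl := Fin.eq_zero i; exact absurd hi hB
  · obtain rfl := Fin.eq_zero i; exact absurd hi hA
  have hzdot : IsUnit ((fun k => ⅟φ i k) ⬝ᵥ (φ *ᵥ (u ∘ Sum.inl))) := by
    have e : (fun k => ⅟φ i k) ⬝ᵥ (φ *ᵥ (u ∘ Sum.inl)) = (⅟φ *ᵥ (φ *ᵥ (u ∘ Sum.inl))) i := rfl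
    rw [e, mulVec_mulVec, invOf_mul_self, one_mulVec]
    exact hi
  obtain ⟨j, hj⟩ := dot_unit_exists _ _ hzdot
  set w0 : Ind n 1 → R := Sum.elim (Pi.single j 1) 0 with hw0
  have hfiso := vf_iso (R := R) φ
  have hw0perp : (vf : Ind n 1 → R) ⬝ᵥ (Phi φ 1 *ᵥ w0) = 0 := by
    rw [vf_perp]; rfl
  set εU := TvUnit (Phi φ 1) vf w0 hS hfiso hw0perp with hεU
  have hεO : ((εU : Matrix (Ind n 1) (Ind n 1) R))ᵀ * Phi φ 1 * εU = Phi φ 1 :=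
    Tv_orth hS vf w0 hfiso hw0perp
  set u' : Ind n 1 → R := (εU : Matrix (Ind n 1) (Ind n 1) R) *ᵥ u with hu'
  set w' : Ind n 1 → R := (εU : Matrix (Ind n 1) (Ind n 1) R) *ᵥ w with hw'
  have hu'iso : u' ⬝ᵥ (Phi φ 1 *ᵥ u') = 0 := by
    rw [hu', orth_dot _ _ hεO]; exact h0
  have hu'w' : u' ⬝ᵥ (Phi φ 1 *ᵥ w') = 0 := by
    rw [hu', hw', orth_dot _ _ hεO]; exact h1
  have e3 : (Phi φ 1 *ᵥ w0) ⬝ᵥ u = (φ *ᵥ (u ∘ Sum.inl)) j := by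
    rw [dotS _ hS, Phi_mulVec, hw0]
    simp [dotProduct, Fintype.sum_sum_type, Pi.single_apply, Function.comp]
  have hcomp : u' (f0 n) = u (f0 n) - (φ *ᵥ (u ∘ Sum.inl)) j
      - ⅟(2:R) * (w0 ⬝ᵥ (Phi φ 1 *ᵥ w0)) * u (x0 n) := by
    rw [hu', hεU, TvUnit_val, Tv_mulVec, Phi_vf, dot_vx, e3]
    simp only [Pi.add_apply, Pi.sub_apply, Pi.smul_apply, smul_eq_mul]
    rw [show (w0 : Ind n 1 → R) (f0 n) = 0 from by rw [hw0]; rfl,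
      show (vf : Ind n 1 → R) (f0 n) = 1 from rfl]
    ring
  have hunit : IsUnit (u' (f0 n)) := by
    by_contra hnu
    have m0 : u' (f0 n) ∈ IsLocalRing.maximalIdeal R := by
      rw [IsLocalRing.mem_maximalIdeal, mem_nonunits_iff]; exact hnu
    have m1 : u (f0 n) ∈ IsLocalRing.maximalIdeal R := by
      rw [IsLocalRing.mem_maximalIdeal, mem_nonunits_iff]; exact hA
    have mB : u (x0 n) ∈ IsLocalRing.maximalIdeal R := by
      rw [IsLocalRing.mem_maximalIdeal, mem_nonunits_iff]; exact hB
    have m2 : ⅟(2:R) * (w0 ⬝ᵥ (Phi φ 1 *ᵥ w0)) * u (x0 n) ∈ IsLocalRing.maximalIdeal R :=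
      Ideal.mul_mem_left _ _ mB
    have : (φ *ᵥ (u ∘ Sum.inl)) j ∈ IsLocalRing.maximalIdeal R := by
      have e : (φ *ᵥ (u ∘ Sum.inl)) j = u (f0 n)
          - ⅟(2:R) * (w0 ⬝ᵥ (Phi φ 1 *ᵥ w0)) * u (x0 n) - u' (f0 n) := by
        rw [hcomp]; ring
      rw [e]
      exact Ideal.sub_mem _ (Ideal.sub_mem _ m1 m2) m0
    exact (mem_nonunits_iff.mp ((IsLocalRing.mem_maximalIdeal _).mp this)) hj
  have hgval' : ((εU * g * εU⁻¹ : (Matrix (Ind n 1) (Ind n 1) R)ˣ) : Matrix (Ind n 1) (Ind n 1) R)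
      = Tv (Phi φ 1) u' w' := by
    rw [Units.val_mul, Units.val_mul, hg, hu', hw']
    exact Tv_conj u w εU hεO
  have hmem' : εU * g * εU⁻¹ ∈ EOGrp φ 1 :=
    mem_caseA φ hφ u' w' hu'iso hu'w' hunit _ hgval'
  have hε_mem : εU ∈ EOGrp φ 1 := mem_EO_vf φ hφ εU w0 hw0perp rfl
  have hgrw : g = εU⁻¹ * (εU * g * εU⁻¹) * εU := by group
  rw [hgrw]
  exact mul_mem (mul_mem (inv_mem hε_mem) hmem') hε_mem

end MainLemma

end DSERAux

open DSERMat in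
/-- Over a commutative local ring with 2 invertible, `EO_R(q, h)` is a normal
subgroup of `O_R(q ⊥ h)` (case m = 1). -/
theorem dser_EO_normal_local_m_one
    (R : Type*) [CommRing R] [IsLocalRing R] [Invertible (2 : R)]
    (n : ℕ) (hn : 1 ≤ n)
    (φ : Matrix (Fin n) (Fin n) R) [Invertible φ] (hφ : φ.IsSymm) :
    EOGrp φ 1 ≤ OGrp φ 1 ∧ ((EOGrp φ 1).subgroupOf (OGrp φ 1)).Normal := by
  classical
  have hS : (Phi φ 1).transpose = Phi φ 1 := DSERAux.Phi_symm φ hφ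
  have hEO_le : EOGrp φ 1 ≤ OGrp φ 1 := by
    show Subgroup.closure (ElemSet φ 1) ≤ OGrp φ 1
    rw [Subgroup.closure_le]
    rintro s ⟨α, hα | hα⟩
    · exact DSERAux.mem_O_of_val_Tv φ hφ s DSERAux.vx _
        (DSERAux.vx_iso φ) (by rw [DSERAux.vx_perp]; rfl)
        (hα.trans (DSERAux.Emat_eq_Tv φ α hφ))
    · exact DSERAux.mem_O_of_val_Tv φ hφ s DSERAux.vf _
        (DSERAux.vf_iso φ) (by rw [DSERAux.vf_perp]; rfl)
        (hα.trans (DSERAux.EmatStar_eq_Tv φ α hφ))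
  refine ⟨hEO_le, ?_⟩
  have hconj : ∀ G : (Matrix (Ind n 1) (Ind n 1) R)ˣ, G ∈ OGrp φ 1 →
      ∀ y ∈ EOGrp φ 1, G * y * G⁻¹ ∈ EOGrp φ 1 := by
    intro G hG y hy
    have hGO : (G : Matrix (Ind n 1) (Ind n 1) R).transpose * Phi φ 1 * G = Phi φ 1 := hG
    have hGinv : ((G⁻¹ : (Matrix (Ind n 1) (Ind n 1) R)ˣ) : Matrix (Ind n 1) (Ind n 1) R) *
        (G : Matrix (Ind n 1) (Ind n 1) R) = 1 := by
      rw [← Units.val_mul, inv_mul_cancel, Units.val_one]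
    have hle : Subgroup.closure (ElemSet φ 1) ≤
        Subgroup.comap ((MulAut.conj G).toMonoidHom) (EOGrp φ 1) := by
      rw [Subgroup.closure_le]
      rintro s ⟨α, hα | hα⟩ <;> rw [SetLike.mem_coe, Subgroup.mem_comap] <;>
        simp only [MulEquiv.coe_toMonoidHom, MulAut.conj_apply]
      · -- E_α generator
        set wα : Ind n 1 → R :=
          Sum.elim (fun j => -((⅟φ * α.transpose) j 0)) (0 : Fin 1 ⊕ Fin 1 → R) with hwα
        have hval : ((G * s * G⁻¹ : (Matrix (Ind n 1) (Ind n 1) R)ˣ) :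
            Matrix (Ind n 1) (Ind n 1) R)
            = DSERAux.Tv (Phi φ 1) (Matrix.mulVec (G : Matrix (Ind n 1) (Ind n 1) R) DSERAux.vx)
              (Matrix.mulVec (G : Matrix (Ind n 1) (Ind n 1) R) wα) := by
          rw [Units.val_mul, Units.val_mul, hα, DSERAux.Emat_eq_Tv φ α hφ, ← hwα]
          exact DSERAux.Tv_conj DSERAux.vx wα G hGO
        refine DSERAux.mem_main φ hφ _ _ ?_ ?_ ?_ _ hval
        · rw [DSERAux.orth_dot _ _ hGO]; exact DSERAux.vx_iso φ
        · rw [DSERAux.orth_dot _ _ hGO, DSERAux.vx_perp]; rfl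
        · refine ⟨fun k => ((G⁻¹ : (Matrix (Ind n 1) (Ind n 1) R)ˣ) :
            Matrix (Ind n 1) (Ind n 1) R) (DSERAux.x0 n) k, ?_⟩
          have e : dotProduct (fun k => ((G⁻¹ : (Matrix (Ind n 1) (Ind n 1) R)ˣ) :
              Matrix (Ind n 1) (Ind n 1) R) (DSERAux.x0 n) k)
              (Matrix.mulVec (G : Matrix (Ind n 1) (Ind n 1) R) DSERAux.vx)
              = (Matrix.mulVec ((G⁻¹ : (Matrix (Ind n 1) (Ind n 1) R)ˣ) : Matrix (Ind n 1) (Ind n 1) R)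
                (Matrix.mulVec (G : Matrix (Ind n 1) (Ind n 1) R) DSERAux.vx)) (DSERAux.x0 n) := rfl
          rw [e, Matrix.mulVec_mulVec, hGinv, Matrix.one_mulVec]
          exact isUnit_one
      · -- E*_β generator
        set wβ : Ind n 1 → R :=
          Sum.elim (fun j => -((⅟φ * α.transpose) j 0)) (0 : Fin 1 ⊕ Fin 1 → R) with hwβ
        have hval : ((G * s * G⁻¹ : (Matrix (Ind n 1) (Ind n 1) R)ˣ) :
            Matrix (Ind n 1) (Ind n 1) R)
            = DSERAux.Tv (Phi φ 1) (Matrix.mulVec (G : Matrix (Ind n 1) (Ind n 1) R) DSERAux.vf)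
              (Matrix.mulVec (G : Matrix (Ind n 1) (Ind n 1) R) wβ) := by
          rw [Units.val_mul, Units.val_mul, hα, DSERAux.EmatStar_eq_Tv φ α hφ, ← hwβ]
          exact DSERAux.Tv_conj DSERAux.vf wβ G hGO
        refine DSERAux.mem_main φ hφ _ _ ?_ ?_ ?_ _ hval
        · rw [DSERAux.orth_dot _ _ hGO]; exact DSERAux.vf_iso φ
        · rw [DSERAux.orth_dot _ _ hGO, DSERAux.vf_perp]; rfl
        · refine ⟨fun k => ((G⁻¹ : (Matrix (Ind n 1) (Ind n 1) R)ˣ) :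
            Matrix (Ind n 1) (Ind n 1) R) (DSERAux.f0 n) k, ?_⟩
          have e : dotProduct (fun k => ((G⁻¹ : (Matrix (Ind n 1) (Ind n 1) R)ˣ) :
              Matrix (Ind n 1) (Ind n 1) R) (DSERAux.f0 n) k)
              (Matrix.mulVec (G : Matrix (Ind n 1) (Ind n 1) R) DSERAux.vf)
              = (Matrix.mulVec ((G⁻¹ : (Matrix (Ind n 1) (Ind n 1) R)ˣ) : Matrix (Ind n 1) (Ind n 1) R)
                (Matrix.mulVec (G : Matrix (Ind n 1) (Ind n 1) R) DSERAux.vf)) (DSERAux.f0 n) := rfl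
          rw [e, Matrix.mulVec_mulVec, hGinv, Matrix.one_mulVec]
          exact isUnit_one
    have := hle hy
    rwa [Subgroup.mem_comap, MulEquiv.coe_toMonoidHom, MulAut.conj_apply] at this
  constructor
  intro x hx g
  rw [Subgroup.mem_subgroupOf] at hx ⊢
  have : ((g * x * g⁻¹ : ↥(OGrp φ 1)) : (Matrix (Ind n 1) (Ind n 1) R)ˣ)
      = (g : (Matrix (Ind n 1) (Ind n 1) R)ˣ) * x * (g : (Matrix (Ind n 1) (Ind n 1) R)ˣ)⁻¹ := by
    push_cast
    rfl
  rw [this]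
  exact hconj g g.2 x hx
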